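/- Let S = K[x_1,...,x_n] with a fixed monomial order and let J, E be ideals of S. Then in(J+E) = in(J) + in(E) if and only if for every nonzero h ∈ J + E there exist f ∈ J and g ∈ E with h = f - g and in(f) ≠ in(g) (where in of the zero polynomial is interpreted so that the condition holds if one of f, g is zero and the other has leading monomial equal to in(h)). -/

import Mathlib

open MvPolynomial

variable {K : Type*} [Field K] {n : ℕ}

/-- The leading monomial (exponent vector) of a polynomial with respect to a monomial
order `m`: the maximum of the support; by convention `lm m 0 = 0`. -/
noncomputable def lm (m : MonomialOrder (Fin n)) (f : MvPolynomial (Fin n) K) :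
    Fin n →₀ ℕ :=
  m.toSyn.symm (f.support.sup fun d => m.toSyn d)

/-- The initial ideal of `I`: the ideal generated by the leading monomials of the
nonzero elements of `I`. -/
noncomputable def initialIdeal (m : MonomialOrder (Fin n))
    (I : Ideal (MvPolynomial (Fin n) K)) : Ideal (MvPolynomial (Fin n) K) :=
  Ideal.span {p | ∃ f ∈ I, f ≠ 0 ∧ p = monomial (lm m f) (1 : K)}

/-- `G` is a Gröbner basis of `I`: a finite set of nonzero polynomials generating `I`
whose leading monomials generate the initial ideal of `I`. -/
def IsGroebnerBasis (m : MonomialOrder (Fin n)) (I : Ideal (MvPolynomial (Fin n) K))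
    (G : Set (MvPolynomial (Fin n) K)) : Prop :=
  G.Finite ∧ (0 : MvPolynomial (Fin n) K) ∉ G ∧ Ideal.span G = I ∧
    Ideal.span ((fun g => monomial (lm m g) (1 : K)) '' G) = initialIdeal m I

/-- The S-polynomial `S(f,g)` with respect to the monomial order `m`. -/
noncomputable def sPoly (m : MonomialOrder (Fin n)) (f g : MvPolynomial (Fin n) K) :
    MvPolynomial (Fin n) K :=
  monomial (lm m f ⊔ lm m g - lm m f) (f.coeff (lm m f))⁻¹ * f -
    monomial (lm m f ⊔ lm m g - lm m g) (g.coeff (lm m g))⁻¹ * g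

/-- An ideal is a monomial ideal if it is generated by monomials. -/
def IsMonomialIdeal (I : Ideal (MvPolynomial (Fin n) K)) : Prop :=
  ∃ M : Set (Fin n →₀ ℕ), I = Ideal.span ((fun μ => (monomial μ (1 : K))) '' M)

open scoped MonomialOrder

section Lm
variable (m : MonomialOrder (Fin n)) {p f g : MvPolynomial (Fin n) K}

lemma toSyn_lm (p : MvPolynomial (Fin n) K) :
    m.toSyn (lm m p) = p.support.sup fun d => m.toSyn d :=
  m.toSyn.apply_symm_apply _

lemma le_lm {e : Fin n →₀ ℕ} (he : e ∈ p.support) : e ≼[m] lm m p := by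
  rw [toSyn_lm]; exact Finset.le_sup he

lemma lm_mem_support (hp : p ≠ 0) : lm m p ∈ p.support := by
  obtain ⟨d, hd, hsup⟩ := Finset.exists_mem_eq_sup p.support
    (by simpa using hp) fun d => m.toSyn d
  have : lm m p = d := by
    apply m.toSyn.injective
    rw [toSyn_lm, hsup]
  rwa [this]

lemma coeff_lm_ne_zero (hp : p ≠ 0) : p.coeff (lm m p) ≠ 0 := by
  simpa using lm_mem_support m hp

lemma coeff_eq_zero_of_lm_lt {e : Fin n →₀ ℕ} (h : lm m p ≺[m] e) : p.coeff e = 0 := by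
  by_contra hc
  exact absurd (le_lm m (by simpa using hc)) (not_le.mpr h)

lemma lm_eq_of {d : Fin n →₀ ℕ} (hd : p.coeff d ≠ 0)
    (h : ∀ e ∈ p.support, e ≼[m] d) : lm m p = d := by
  apply m.toSyn.injective
  rw [toSyn_lm]
  exact le_antisymm (Finset.sup_le h) (Finset.le_sup (by simpa using hd))

lemma lm_neg (p : MvPolynomial (Fin n) K) : lm m (-p) = lm m p := by
  unfold lm; rw [support_neg]

lemma lm_add_of_lt (hf : f ≠ 0) (hg : g = 0 ∨ (lm m g ≺[m] lm m f)) :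
    lm m (f + g) = lm m f := by
  have hcoeff : (f + g).coeff (lm m f) ≠ 0 := by
    rw [coeff_add]
    rcases hg with h | h
    · simp [h, coeff_lm_ne_zero m hf]
    · rw [coeff_eq_zero_of_lm_lt m h, add_zero]
      exact coeff_lm_ne_zero m hf
  apply lm_eq_of m hcoeff
  intro e he
  have := Finsupp.support_add he
  rw [Finset.mem_union] at this
  rcases this with h | h
  · exact le_lm m h
  · rcases hg with h0 | hlt
    · simp [h0] at h
    · exact le_of_lt (lt_of_le_of_lt (le_lm m h) hlt)

lemma lm_sub_of_lt (hf : f ≠ 0) (hg : g = 0 ∨ (lm m g ≺[m] lm m f)) :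
    lm m (f - g) = lm m f := by
  rw [sub_eq_add_neg]
  apply lm_add_of_lt m hf
  rcases hg with h | h
  · left; simp [h]
  · right; rwa [lm_neg]

lemma lm_monomial_mul {δ : Fin n →₀ ℕ} {c : K} (hc : c ≠ 0) (hf : f ≠ 0) :
    lm m (monomial δ c * f) = δ + lm m f := by
  classical
  apply lm_eq_of m
  · rw [coeff_monomial_mul]
    exact mul_ne_zero hc (coeff_lm_ne_zero m hf)
  · intro e he
    have := support_mul (monomial δ c) f he
    rw [Finset.mem_add] at this
    obtain ⟨a, ha, b, hb, rfl⟩ := this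
    rw [support_monomial, if_neg hc, Finset.mem_singleton] at ha
    subst ha
    rw [map_add, map_add]
    exact add_le_add le_rfl (le_lm m hb)

lemma lm_sub_lt (hq : lm m g = lm m f) (hcoeff : g.coeff (lm m f) = f.coeff (lm m f))
    (hne : f - g ≠ 0) : lm m (f - g) ≺[m] lm m f := by
  have hmem := lm_mem_support m hne
  have hle : ∀ e ∈ (f - g).support, e ≼[m] lm m f := by
    intro e he
    have : e ∈ f.support ∪ g.support := by
      exact Finsupp.support_sub he
    rcases Finset.mem_union.mp this with h | h
    · exact le_lm m h
    · rw [← hq]; exact le_lm m h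
  have hne' : lm m (f - g) ≠ lm m f := by
    intro heq
    have : (f - g).coeff (lm m f) = 0 := by
      rw [coeff_sub, hcoeff, sub_self]
    exact coeff_lm_ne_zero m hne (heq ▸ this)
  exact lt_of_le_of_ne (hle _ hmem) (fun h => hne' (m.toSyn.injective h))

end Lm

lemma initialIdeal_eq_span_image (m : MonomialOrder (Fin n)) (I : Ideal (MvPolynomial (Fin n) K)) :
    initialIdeal m I =
      Ideal.span ((fun ν => monomial ν (1 : K)) '' {ν | ∃ f ∈ I, f ≠ 0 ∧ ν = lm m f}) := by
  unfold initialIdeal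
  congr 1
  ext p
  constructor
  · rintro ⟨f, hf, hne, rfl⟩
    exact ⟨lm m f, ⟨f, hf, hne, rfl⟩, rfl⟩
  · rintro ⟨ν, ⟨f, hf, hne, rfl⟩, rfl⟩
    exact ⟨f, hf, hne, rfl⟩

lemma bound_of_decomp (m : MonomialOrder (Fin n)) {h' f2 g2 : MvPolynomial (Fin n) K} (heq : h' = f2 - g2)
    (hcond : f2 = 0 ∨ g2 = 0 ∨ lm m f2 ≠ lm m g2) :
    (f2 = 0 ∨ (lm m f2 ≼[m] lm m h')) ∧ (g2 = 0 ∨ (lm m g2 ≼[m] lm m h')) := by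
  subst heq
  by_cases hf2 : f2 = 0
  · refine ⟨Or.inl hf2, ?_⟩
    by_cases hg2 : g2 = 0
    · exact Or.inl hg2
    · right; subst hf2
      rw [zero_sub, lm_neg]
  by_cases hg2 : g2 = 0
  · subst hg2
    exact ⟨Or.inr (by rw [sub_zero]), Or.inl rfl⟩
  · have hne : lm m f2 ≠ lm m g2 := by tauto
    rcases lt_trichotomy (m.toSyn (lm m f2)) (m.toSyn (lm m g2)) with hlt | heq2 | hgt
    · have hkey : lm m (f2 - g2) = lm m g2 := by
        have hsw : f2 - g2 = -(g2 - f2) := by ring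
        rw [hsw, lm_neg, lm_sub_of_lt m hg2 (Or.inr hlt)]
      exact ⟨Or.inr (by rw [hkey]; exact le_of_lt hlt), Or.inr (by rw [hkey])⟩
    · exact absurd (m.toSyn.injective heq2) hne
    · have hkey : lm m (f2 - g2) = lm m f2 := lm_sub_of_lt m hf2 (Or.inr hgt)
      exact ⟨Or.inr (by rw [hkey]), Or.inr (by rw [hkey]; exact le_of_lt hgt)⟩


/-- `in(J+E) = in(J) + in(E)` iff every nonzero `h ∈ J + E` can be written as
`h = f - g` with `f ∈ J`, `g ∈ E` and `in(f) ≠ in(g)` (the condition being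
satisfied by convention when `f` or `g` is zero). -/
theorem stmt4 (m : MonomialOrder (Fin n)) (J E : Ideal (MvPolynomial (Fin n) K)) :
    initialIdeal m (J + E) = initialIdeal m J + initialIdeal m E ↔
      ∀ h ∈ J + E, h ≠ 0 → ∃ f ∈ J, ∃ g ∈ E,
        h = f - g ∧ (f = 0 ∨ g = 0 ∨ lm m f ≠ lm m g) := by
  classical
  constructor
  · intro hEq
    have main : ∀ s : m.syn, ∀ h : MvPolynomial (Fin n) K, h ∈ J + E → h ≠ 0 →
        m.toSyn (lm m h) = s → ∃ f ∈ J, ∃ g ∈ E,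
          h = f - g ∧ (f = 0 ∨ g = 0 ∨ lm m f ≠ lm m g) := by
      intro s
      induction s using WellFoundedLT.induction with
      | _ s ih =>
        intro h hmem hne hs
        -- the leading monomial of h is in in(J) + in(E)
        have h1 : (monomial (lm m h) (1 : K)) ∈ initialIdeal m J + initialIdeal m E := by
          rw [← hEq]
          exact Ideal.subset_span ⟨h, hmem, hne, rfl⟩
        set MJ : Set (Fin n →₀ ℕ) := {ν | ∃ f ∈ J, f ≠ 0 ∧ ν = lm m f} with hMJ
        set ME : Set (Fin n →₀ ℕ) := {ν | ∃ g ∈ E, g ≠ 0 ∧ ν = lm m g} with hME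
        have h2 : (monomial (lm m h) (1 : K)) ∈
            Ideal.span ((fun ν => monomial ν (1 : K)) '' (MJ ∪ ME)) := by
          rw [Set.image_union, Ideal.span_union, ← initialIdeal_eq_span_image,
            ← initialIdeal_eq_span_image]
          exact h1
        rw [mem_ideal_span_monomial_image] at h2
        obtain ⟨ν, hν, hle⟩ := h2 (lm m h) (by
          rw [support_monomial, if_neg (one_ne_zero)]
          exact Finset.mem_singleton_self _)
        obtain ⟨δ, hδ⟩ := le_iff_exists_add.mp hle
        -- hδ : lm m h = ν + δ
        rcases hν with hνJ | hνE
        · obtain ⟨f0, hf0J, hf0ne, rfl⟩ := hνJ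
          set c : K := h.coeff (lm m h) * (f0.coeff (lm m f0))⁻¹ with hc
          have hcne : c ≠ 0 := mul_ne_zero (coeff_lm_ne_zero m hne)
            (inv_ne_zero (coeff_lm_ne_zero m hf0ne))
          set f1 : MvPolynomial (Fin n) K := monomial δ c * f0 with hf1
          have hf1J : f1 ∈ J := Ideal.mul_mem_left _ _ hf0J
          have hlm1 : lm m f1 = lm m h := by
            rw [hf1, lm_monomial_mul m hcne hf0ne, hδ, add_comm]
          have hco1 : f1.coeff (lm m h) = h.coeff (lm m h) := by
            rw [hδ, add_comm (lm m f0) δ, hf1, coeff_monomial_mul, hc, mul_assoc,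
              inv_mul_cancel₀ (coeff_lm_ne_zero m hf0ne), mul_one, ← add_comm (lm m f0) δ, ← hδ]
          have hf1ne : f1 ≠ 0 := by
            intro h0
            rw [h0, coeff_zero] at hco1
            exact coeff_lm_ne_zero m hne hco1.symm
          by_cases hh' : h - f1 = 0
          · exact ⟨f1, hf1J, 0, zero_mem _, by rw [sub_zero]; exact sub_eq_zero.mp hh',
              Or.inr (Or.inl rfl)⟩
          · have hlt : lm m (h - f1) ≺[m] lm m h := lm_sub_lt m hlm1 hco1 hh'
            have hmem' : h - f1 ∈ J + E := sub_mem hmem (Ideal.mem_sup_left hf1J)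
            obtain ⟨f2, hf2J, g2, hg2E, heq2, hcond2⟩ :=
              ih (m.toSyn (lm m (h - f1))) (hs ▸ hlt) (h - f1) hmem' hh' rfl
            obtain ⟨hbf, hbg⟩ := bound_of_decomp m heq2 hcond2
            refine ⟨f1 + f2, Ideal.add_mem _ hf1J hf2J, g2, hg2E, ?_, ?_⟩
            · rw [add_sub_assoc, ← heq2]; ring
            · by_cases hg2z : g2 = 0
              · exact Or.inr (Or.inl hg2z)
              · have hg2lt : lm m g2 ≺[m] lm m h := by
                  rcases hbg with h0 | hle'
                  · exact absurd h0 hg2z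
                  · exact lt_of_le_of_lt hle' hlt
                have hf12 : lm m (f1 + f2) = lm m h := by
                  rw [lm_add_of_lt m hf1ne ?_, hlm1]
                  rcases hbf with h0 | hle'
                  · exact Or.inl h0
                  · exact Or.inr (by rw [hlm1]; exact lt_of_le_of_lt hle' hlt)
                refine Or.inr (Or.inr ?_)
                intro heq3
                rw [hf12] at heq3
                exact absurd (heq3 ▸ hg2lt) (lt_irrefl _)
        · obtain ⟨f0, hf0E, hf0ne, rfl⟩ := hνE
          set c : K := h.coeff (lm m h) * (f0.coeff (lm m f0))⁻¹ with hc
          have hcne : c ≠ 0 := mul_ne_zero (coeff_lm_ne_zero m hne)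
            (inv_ne_zero (coeff_lm_ne_zero m hf0ne))
          set f1 : MvPolynomial (Fin n) K := monomial δ c * f0 with hf1
          have hf1E : f1 ∈ E := Ideal.mul_mem_left _ _ hf0E
          have hlm1 : lm m f1 = lm m h := by
            rw [hf1, lm_monomial_mul m hcne hf0ne, hδ, add_comm]
          have hco1 : f1.coeff (lm m h) = h.coeff (lm m h) := by
            rw [hδ, add_comm (lm m f0) δ, hf1, coeff_monomial_mul, hc, mul_assoc,
              inv_mul_cancel₀ (coeff_lm_ne_zero m hf0ne), mul_one, ← add_comm (lm m f0) δ, ← hδ]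
          have hf1ne : f1 ≠ 0 := by
            intro h0
            rw [h0, coeff_zero] at hco1
            exact coeff_lm_ne_zero m hne hco1.symm
          by_cases hh' : h - f1 = 0
          · refine ⟨0, zero_mem _, -f1, neg_mem hf1E, ?_, Or.inl rfl⟩
            rw [zero_sub, neg_neg]
            exact sub_eq_zero.mp hh'
          · have hlt : lm m (h - f1) ≺[m] lm m h := lm_sub_lt m hlm1 hco1 hh'
            have hmem' : h - f1 ∈ J + E := sub_mem hmem (Ideal.mem_sup_right hf1E)
            obtain ⟨f2, hf2J, g2, hg2E, heq2, hcond2⟩ :=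
              ih (m.toSyn (lm m (h - f1))) (hs ▸ hlt) (h - f1) hmem' hh' rfl
            obtain ⟨hbf, hbg⟩ := bound_of_decomp m heq2 hcond2
            refine ⟨f2, hf2J, g2 - f1, sub_mem hg2E hf1E, ?_, ?_⟩
            · have h3 := heq2
              rw [sub_eq_iff_eq_add] at h3
              rw [h3]; ring
            · by_cases hf2z : f2 = 0
              · exact Or.inl hf2z
              · have hf2lt : lm m f2 ≺[m] lm m h := by
                  rcases hbf with h0 | hle'
                  · exact absurd h0 hf2z
                  · exact lt_of_le_of_lt hle' hlt
                have hg2f1 : lm m (g2 - f1) = lm m h := by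
                  have hsw : g2 - f1 = -(f1 - g2) := by ring
                  rw [hsw, lm_neg, lm_sub_of_lt m hf1ne ?_, hlm1]
                  rcases hbg with h0 | hle'
                  · exact Or.inl h0
                  · exact Or.inr (by rw [hlm1]; exact lt_of_le_of_lt hle' hlt)
                refine Or.inr (Or.inr ?_)
                intro heq3
                rw [hg2f1] at heq3
                exact absurd (heq3 ▸ hf2lt) (lt_irrefl _)
    intro h hmem hne
    exact main (m.toSyn (lm m h)) h hmem hne rfl
  · intro H
    apply le_antisymm
    · apply Ideal.span_le.mpr
      rintro p ⟨h, hmem, hne, rfl⟩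
      obtain ⟨f, hf, g, hg, heq, hcond⟩ := H h hmem hne
      obtain ⟨hbf, hbg⟩ := bound_of_decomp m heq hcond
      by_cases hgz : g = 0
      · subst hgz
        rw [sub_zero] at heq
        subst heq
        exact Ideal.mem_sup_left (Ideal.subset_span ⟨h, hf, hne, rfl⟩)
      by_cases hfz : f = 0
      · subst hfz
        rw [zero_sub] at heq
        subst heq
        rw [lm_neg]
        exact Ideal.mem_sup_right (Ideal.subset_span ⟨g, hg, hgz, rfl⟩)
      · have hne' : lm m f ≠ lm m g := by tauto
        rcases lt_trichotomy (m.toSyn (lm m f)) (m.toSyn (lm m g)) with hlt | heq2 | hgt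
        · have : lm m h = lm m g := by
            subst heq
            have hsw : f - g = -(g - f) := by ring
            rw [hsw, lm_neg, lm_sub_of_lt m hgz (Or.inr hlt)]
          rw [this]
          exact Ideal.mem_sup_right (Ideal.subset_span ⟨g, hg, hgz, rfl⟩)
        · exact absurd (m.toSyn.injective heq2) hne'
        · have : lm m h = lm m f := by
            subst heq
            exact lm_sub_of_lt m hfz (Or.inr hgt)
          rw [this]
          exact Ideal.mem_sup_left (Ideal.subset_span ⟨f, hf, hfz, rfl⟩)
    · apply sup_le
      · apply Ideal.span_mono
        rintro p ⟨f, hf, hne, rfl⟩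
        exact ⟨f, Ideal.mem_sup_left hf, hne, rfl⟩
      · apply Ideal.span_mono
        rintro p ⟨g, hg, hne, rfl⟩
        exact ⟨g, Ideal.mem_sup_right hg, hne, rfl⟩
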